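/- For n ≥ 3 define the n-qubit linear cluster state Lin_n : (Fin n → Fin 2) → ℂ by Lin_n(x) = 2^{-n/2}·(-1)^{∑_{i=0}^{n-2} x_i x_{i+1}}, and similarly Lin_{n-1} on n-1 qubits. Fix m ∈ {0,1}, and let H := (1/√2)·!![1,1;1,-1] and Z := !![1,0;0,-1]. Define w : (Fin (n-1) → Fin 2) → ℂ by contracting the second qubit of Lin_n with the σ_x eigenvector ⟨x_m| = (⟨0| + (-1)^m⟨1|)/√2: w(a, y) := ∑_{b ∈ Fin 2} (1/√2)·(-1)^{m·b} · Lin_n(a, b, y), where y ranges over qubits 3,…,n. Then applying Z^m·H to the first qubit of w gives exactly (1/√2)·Lin_{n-1}: for all (a', y), ∑_{a ∈ Fin 2} (Z^m·H)_{a',a} · w(a, y) = (1/√2)·Lin_{n-1}(a', y). -/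
import Mathlib


/-- The `n`-qubit linear cluster state amplitudes:
`Lin_n(x) = 2^{-n/2} · (-1)^{∑_{i=0}^{n-2} xᵢ·xᵢ₊₁}`, with `2^{-n/2} = (√2)⁻ⁿ`. -/
noncomputable def Lin (n : ℕ) (x : Fin n → Fin 2) : ℂ :=
  (((Real.sqrt 2)⁻¹ ^ n : ℝ) : ℂ) *
    (-1 : ℂ) ^ (∑ i : Fin (n - 1),
      ((x ⟨i.1, by have := i.isLt; omega⟩ : Fin 2) : ℕ) *
      ((x ⟨i.1 + 1, by have := i.isLt; omega⟩ : Fin 2) : ℕ))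

/-- The Hadamard gate `H = (1/√2)·!![1,1;1,-1]`. -/
noncomputable def Hgate : Matrix (Fin 2) (Fin 2) ℂ :=
  ((1 / Real.sqrt 2 : ℝ) : ℂ) • !![1, 1; 1, -1]

/-- The Pauli `Z` gate. -/
def Zgate : Matrix (Fin 2) (Fin 2) ℂ := !![1, 0; 0, -1]

/-- Insert a bit `b` as the second qubit of an `(n+2)`-qubit basis string,
producing an `(n+3)`-qubit basis string `(z₀, b, z₁, …, z_{n+1})`. -/
def insSnd (n : ℕ) (b : Fin 2) (z : Fin (n + 2) → Fin 2) : Fin (n + 3) → Fin 2 :=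
  fun i =>
    if i.1 = 0 then z ⟨0, by omega⟩
    else if i.1 = 1 then b
    else z ⟨i.1 - 1, by have := i.isLt; omega⟩

/-- The (subnormalized) post-measurement state obtained by contracting the second
qubit of `Lin_{n+3}` with the `σ_x` eigenvector `⟨x_m| = (⟨0| + (-1)^m ⟨1|)/√2`:
`w(a,y) = ∑_b (1/√2)·(-1)^{m·b}·Lin_{n+3}(a, b, y)`. -/
noncomputable def wX (n m : ℕ) (z : Fin (n + 2) → Fin 2) : ℂ :=
  ∑ b : Fin 2,
    (((Real.sqrt 2)⁻¹ : ℝ) : ℂ) * (-1 : ℂ) ^ (m * (b : ℕ)) * Lin (n + 3) (insSnd n b z)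

noncomputable def sc : ℂ := (((Real.sqrt 2)⁻¹ : ℝ) : ℂ)

def T (n : ℕ) (z : Fin (n + 2) → Fin 2) : ℕ :=
  ∑ i : Fin n, ((z ⟨i.1 + 1, by omega⟩ : Fin 2) : ℕ) * ((z ⟨i.1 + 2, by omega⟩ : Fin 2) : ℕ)

lemma lin_expand (n : ℕ) (z : Fin (n + 2) → Fin 2) :
    Lin (n + 2) z = sc ^ (n + 2) * (-1 : ℂ) ^ (((z 0 : ℕ)) * (z ⟨1, by omega⟩ : ℕ) + T n z) := by
  unfold Lin sc T
  push_cast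
  congr 1
  congr 1
  show (∑ i : Fin (n+1), ((z ⟨i.1, by omega⟩ : Fin 2) : ℕ) *
      ((z ⟨i.1 + 1, by omega⟩ : Fin 2) : ℕ)) = _
  rw [Fin.sum_univ_succ]
  congr 1

lemma lin_ins (n : ℕ) (b : Fin 2) (z : Fin (n + 2) → Fin 2) :
    Lin (n + 3) (insSnd n b z) =
      sc ^ (n + 3) * (-1 : ℂ) ^ ((z 0 : ℕ) * (b : ℕ) + (b : ℕ) * (z ⟨1, by omega⟩ : ℕ) + T n z) := by
  unfold Lin sc T insSnd
  push_cast
  congr 1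
  congr 1
  show (∑ i : Fin (n+2),
      ((if (i.1 : ℕ) = 0 then z ⟨0, by omega⟩ else if (i.1 : ℕ) = 1 then b
        else z ⟨i.1 - 1, by have := i.isLt; omega⟩ : Fin 2) : ℕ) *
      ((if (i.1 : ℕ) = 0 then b else z ⟨i.1, by omega⟩ : Fin 2) : ℕ)) = _
  rw [Fin.sum_univ_succ, Fin.sum_univ_succ]
  simp only [Fin.val_zero, Fin.val_succ]
  norm_num
  rw [← add_assoc]

lemma wX_eq (n m : ℕ) (z : Fin (n + 2) → Fin 2) :
    wX n m z = sc * (sc ^ (n + 3) *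
      ((-1 : ℂ) ^ (T n z) +
        (-1 : ℂ) ^ m * (-1 : ℂ) ^ ((z 0 : ℕ)) * (-1 : ℂ) ^ ((z ⟨1, by omega⟩ : Fin 2) : ℕ)
          * (-1 : ℂ) ^ (T n z))) := by
  unfold wX
  rw [Fin.sum_univ_two, lin_ins, lin_ins]
  show sc * _ * _ + sc * _ * _ = _
  simp only [Fin.val_zero, Fin.val_one, Nat.mul_zero, Nat.mul_one, Nat.zero_mul, Nat.one_mul,
    Nat.zero_add, Nat.add_zero, pow_add, pow_zero, one_mul, mul_one]
  ring

/-- for `n + 3 ≥ 3` qubits: measuring the second qubit of a linear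
cluster chain in the `σ_x` basis with outcome `m ∈ {0,1}` and applying the local
correction `Z^m·H` to the first qubit yields `(1/√2)·Lin_{n+2}`:
`∑_a (Z^m·H)_{a',a} · w(a, y) = (1/√2)·Lin_{n+2}(a', y)` for all `(a', y)`. -/
theorem stmt_13 (n m : ℕ) (hm : m = 0 ∨ m = 1) (x' : Fin (n + 2) → Fin 2) :
    ∑ a : Fin 2, (Zgate ^ m * Hgate) (x' 0) a * wX n m (Function.update x' 0 a)
      = (((Real.sqrt 2)⁻¹ : ℝ) : ℂ) * Lin (n + 2) x' := by
  have h2 : ∀ c : Fin 2, c = 0 ∨ c = 1 := by decide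
  have hs : sc * sc = 1 / 2 := by
    unfold sc
    rw [← Complex.ofReal_mul, ← mul_inv, Real.mul_self_sqrt (by norm_num)]
    norm_num
  have hone : (⟨1, by omega⟩ : Fin (n + 2)) ≠ 0 := by simp [Fin.ext_iff]
  have hupT : ∀ a, T n (Function.update x' 0 a) = T n x' := by
    intro a; unfold T
    refine Finset.sum_congr rfl fun i _ => ?_
    rw [Function.update_of_ne (by simp [Fin.ext_iff]), Function.update_of_ne (by simp [Fin.ext_iff])]
  rw [Fin.sum_univ_two, wX_eq, wX_eq, lin_expand,
    Function.update_self, Function.update_self,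
    Function.update_of_ne hone, Function.update_of_ne hone, hupT, hupT]
  unfold sc at hs ⊢
  push_cast at hs ⊢
  have hb2 : ((Real.sqrt 2 : ℝ) : ℂ)⁻¹ ^ 2 = 1 / 2 := by rw [sq]; exact hs
  have hb3 : ((Real.sqrt 2 : ℝ) : ℂ)⁻¹ ^ 3 = ((Real.sqrt 2 : ℝ) : ℂ)⁻¹ / 2 := by
    rw [show (3 : ℕ) = 2 + 1 from rfl, pow_add, hb2]; ring
  have hb4 : ((Real.sqrt 2 : ℝ) : ℂ)⁻¹ ^ 4 = 1 / 4 := by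
    rw [show (4 : ℕ) = 2 + 2 from rfl, pow_add, hb2]; norm_num
  have hb5 : ((Real.sqrt 2 : ℝ) : ℂ)⁻¹ ^ 5 = ((Real.sqrt 2 : ℝ) : ℂ)⁻¹ / 4 := by
    rw [show (5 : ℕ) = 2 + 3 from rfl, pow_add, hb2, hb3]; ring
  rcases hm with rfl | rfl <;>
  rcases h2 (x' 0) with hp | hp <;>
  rcases h2 (x' ⟨1, by omega⟩) with hq | hq <;>
  rw [hp, hq] <;>
  norm_num [Zgate, Hgate, Matrix.one_mul, Matrix.mul_apply,
    Fin.sum_univ_two, Matrix.smul_apply, smul_eq_mul, Matrix.of_apply, Matrix.cons_val',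
    Matrix.cons_val_zero, Matrix.cons_val_one, Matrix.head_cons, Matrix.empty_val',
    Matrix.cons_val_fin_one, Matrix.one_apply, Fin.val_zero, Fin.val_one, one_div] <;>
  ring_nf <;> simp only [hb2, hb3, hb4, hb5] <;> ring
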